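/- Let m ≤ n. On the vector space V with basis {Z_A : A ⊆ {1,...,n}, |A| = m}, define linear maps: X Z_A = Σ_{C ∈ e(A,1)} Z_C, H Z_A = (2|λ(A)| − m(n−m)) Z_A, and Y Z_A = Σ_{B : A ∈ e(B,1)} b(n−b) Z_B where b is the unique element of B \ A. Then [H,X] = 2X, [H,Y] = −2Y, and [X,Y] = H; i.e., X, Y, H realize 𝔰𝔩_2 on V. -/

import Mathlib

open Finset
open scoped Classical

/-- `|λ(A)| = Σᵢ (Aᵢ − i)`, the number of boxes of the partition associated to `A`. -/
def lamWt {n : ℕ} (A : Finset (Fin n)) : ℕ :=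
  ∑ i : Fin A.card, (((A.orderEmbOfFin rfl i) : ℕ) - (i : ℕ))

/-- `oneBoxUp A C` holds iff the Ferrers diagram of `λ(C)` is obtained from that
of `λ(A)` by adding one box; concretely, `C` is obtained from `A` by replacing
some element `a ∈ A` by `a + 1 ∉ A`.  Thus `C ∈ e(A,1)`. -/
def oneBoxUp {n : ℕ} (A C : Finset (Fin n)) : Prop :=
  ∃ a b : Fin n, a ∈ A ∧ b ∉ A ∧ (b : ℕ) = (a : ℕ) + 1 ∧ C = insert b (A.erase a)

namespace SL2A
variable {n : ℕ}

lemma ne_of_succ {a b : Fin n} (hab : (b:ℕ) = (a:ℕ) + 1) : a ≠ b := by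
  intro h; subst h; omega

lemma obu_facts {B A : Finset (Fin n)} {a b : Fin n}
    (ha : a ∈ B) (hb : b ∉ B) (hab : (b:ℕ) = (a:ℕ)+1) (hA : A = insert b (B.erase a)) :
    b ∈ A ∧ a ∉ A ∧ B = insert a (A.erase b) ∧ B \ A = {a} ∧ A \ B = {b} ∧ A.card = B.card := by
  have hne : a ≠ b := ne_of_succ hab
  subst hA
  refine ⟨mem_insert_self _ _, ?_, ?_, ?_, ?_, ?_⟩
  · simp [mem_insert, mem_erase, hne]
  · ext x
    rcases eq_or_ne x a with rfl|h1 <;> rcases eq_or_ne x b with rfl|h2 <;>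
      simp_all [mem_insert, mem_erase]
  · ext x
    rcases eq_or_ne x a with rfl|h1 <;> rcases eq_or_ne x b with rfl|h2 <;>
      simp_all [mem_insert, mem_erase, mem_sdiff]
  · ext x
    rcases eq_or_ne x a with rfl|h1 <;> rcases eq_or_ne x b with rfl|h2 <;>
      simp_all [mem_insert, mem_erase, mem_sdiff]
  · rw [card_insert_of_notMem (by simp [hne.symm, hb]), card_erase_of_mem ha]
    have : 0 < B.card := card_pos.2 ⟨a, ha⟩
    omega

lemma card_eq_of_obu {B A : Finset (Fin n)} (h : oneBoxUp B A) : A.card = B.card := by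
  obtain ⟨a, b, ha, hb, hab, hA⟩ := h
  exact (obu_facts ha hb hab hA).2.2.2.2.2

end SL2A

namespace SL2A

lemma le_orderEmb (A : Finset (Fin n)) (i : Fin A.card) :
    (i:ℕ) ≤ ((A.orderEmbOfFin rfl i : Fin n) : ℕ) := by
  obtain ⟨k, hk⟩ := i
  induction k with
  | zero => exact Nat.zero_le _
  | succ j ih =>
    have hj : j < A.card := Nat.lt_of_succ_lt hk
    have h1 := ih hj
    have h2 : (A.orderEmbOfFin rfl ⟨j, hj⟩ : Fin n) < A.orderEmbOfFin rfl ⟨j+1, hk⟩ :=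
      (A.orderEmbOfFin rfl).strictMono (by simp [Fin.lt_iff_val_lt_val])
    have h3 := Fin.lt_iff_val_lt_val.1 h2
    simp only [Fin.val_mk] at h1 ⊢
    omega

lemma sum_val_lamWt (A : Finset (Fin n)) :
    lamWt A + ∑ i ∈ range A.card, i = ∑ a ∈ A, (a:ℕ) := by
  have himg : A = Finset.image (fun i => (A.orderEmbOfFin rfl i : Fin n)) univ := by
    apply Finset.coe_injective
    rw [coe_image, coe_univ, Set.image_univ]
    exact (Finset.range_orderEmbOfFin A rfl).symm
  have hsum : ∑ a ∈ A, (a:ℕ) = ∑ i : Fin A.card, ((A.orderEmbOfFin rfl i : Fin n) : ℕ) := by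
    conv_lhs => rw [himg]
    rw [Finset.sum_image (fun x _ y _ h => (A.orderEmbOfFin rfl).injective h)]
  rw [hsum, lamWt, ← Fin.sum_univ_eq_sum_range, ← Finset.sum_add_distrib]
  exact Finset.sum_congr rfl fun i _ => Nat.sub_add_cancel (le_orderEmb A i)

lemma lamWt_complex (A : Finset (Fin n)) :
    (lamWt A : ℂ) = (∑ a ∈ A, ((a:ℕ):ℂ)) - ∑ i ∈ range A.card, (i:ℂ) := by
  have h := sum_val_lamWt A
  have h2 : ((lamWt A + ∑ i ∈ range A.card, i : ℕ) : ℂ) = ((∑ a ∈ A, (a:ℕ) : ℕ) : ℂ) := by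
    rw [h]
  push_cast at h2
  linear_combination h2

lemma gauss (c : ℕ) : (∑ i ∈ range c, (i:ℂ)) * 2 = (c:ℂ)^2 - c := by
  induction c with
  | zero => simp
  | succ k ih =>
    rw [sum_range_succ]
    push_cast
    linear_combination ih

end SL2A

namespace SL2A

lemma lamWt_obu {B A : Finset (Fin n)} (h : oneBoxUp B A) :
    (lamWt A : ℂ) = (lamWt B : ℂ) + 1 := by
  obtain ⟨a, b, ha, hb, hab, hA⟩ := h
  have hcard := (obu_facts ha hb hab hA).2.2.2.2.2
  have hsum : (∑ x ∈ A, ((x:ℕ):ℂ)) = (∑ x ∈ B, ((x:ℕ):ℂ)) + 1 := by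
    have hbe : b ∉ B.erase a := fun hx => hb (mem_of_mem_erase hx)
    have e1 : (∑ x ∈ A, ((x:ℕ):ℂ)) = ((b:ℕ):ℂ) + ∑ x ∈ B.erase a, ((x:ℕ):ℂ) := by
      rw [hA, Finset.sum_insert hbe]
    have e2 : (∑ x ∈ B.erase a, ((x:ℕ):ℂ)) + ((a:ℕ):ℂ) = ∑ x ∈ B, ((x:ℕ):ℂ) :=
      Finset.sum_erase_add B _ ha
    have e3 : ((b:ℕ):ℂ) = ((a:ℕ):ℂ) + 1 := by exact_mod_cast congrArg (Nat.cast : ℕ → ℂ) hab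
    linear_combination e1 + e3 + e2
  rw [lamWt_complex, lamWt_complex, hcard, hsum]
  ring

def predF (b : Fin n) : Fin n := ⟨(b:ℕ) - 1, lt_of_le_of_lt (Nat.sub_le _ _) b.isLt⟩

def succF (a : Fin n) : Fin n := ⟨((a:ℕ) + 1) % n, Nat.mod_lt _ (Nat.pos_of_ne_zero (by
  have := a.isLt; omega))⟩

@[simp] lemma predF_val (b : Fin n) : (predF b : ℕ) = (b:ℕ) - 1 := rfl
@[simp] lemma succF_val (a : Fin n) : (succF a : ℕ) = ((a:ℕ) + 1) % n := rfl

lemma succF_val_of_lt {a : Fin n} (h : (a:ℕ) + 1 < n) : (succF a : ℕ) = (a:ℕ) + 1 := by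
  simp [Nat.mod_eq_of_lt h]

end SL2A

namespace SL2A

noncomputable def wc (S T : Finset (Fin n)) : ℂ :=
  ∑ x ∈ S \ T, ((n : ℂ) - ((x : ℕ) + 1)) * ((x : ℕ) + 1)

lemma down_filter (A : Finset (Fin n)) :
    univ.filter (fun S => oneBoxUp S A) =
    (A.filter (fun b : Fin n => 0 < (b:ℕ) ∧ predF b ∉ A)).image
      (fun b => insert (predF b) (A.erase b)) := by
  ext S
  simp only [mem_filter, mem_univ, true_and, mem_image]
  constructor
  · rintro ⟨a, b, ha, hb, hab, hA⟩
    obtain ⟨hbA, haA, hS, -, -, -⟩ := obu_facts ha hb hab hA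
    have hpb : predF b = a := by
      apply Fin.ext; simp [predF_val, hab]
    exact ⟨b, ⟨hbA, by omega, hpb ▸ haA⟩, by rw [hpb, ← hS]⟩
  · rintro ⟨b, hb, rfl⟩
    obtain ⟨hbA, h0, hpA⟩ := hb
    refine ⟨predF b, b, mem_insert_self _ _, ?_, by simp [predF_val]; omega, ?_⟩
    · simp only [mem_insert, mem_erase, not_or]
      exact ⟨fun h => by have := congrArg Fin.val h; simp at this; omega,
        fun h => h.1 rfl⟩
    · rw [Finset.erase_insert (fun h => hpA (mem_of_mem_erase h)), Finset.insert_erase hbA]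

lemma down_map_sdiff {A : Finset (Fin n)} {b : Fin n} (hbA : b ∈ A) (h0 : 0 < (b:ℕ))
    (hpA : predF b ∉ A) :
    (insert (predF b) (A.erase b)) \ A = {predF b} ∧
    A \ (insert (predF b) (A.erase b)) = {b} := by
  have hne : predF b ≠ b := fun h => by have := congrArg Fin.val h; simp at this; omega
  constructor <;> ext x <;>
    by_cases h1 : x = b <;> by_cases h2 : x = predF b <;>
    simp_all [mem_sdiff, mem_insert, mem_erase]

lemma down_sum (A : Finset (Fin n)) :
    ∑ S ∈ univ.filter (fun S => oneBoxUp S A), wc S A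
    = ∑ b ∈ A.filter (fun b : Fin n => 0 < (b:ℕ) ∧ predF b ∉ A), ((n:ℂ) - (b:ℕ)) * (b:ℕ) := by
  rw [down_filter, Finset.sum_image]
  · apply Finset.sum_congr rfl
    intro b hb
    obtain ⟨hbA, h0, hpA⟩ := mem_filter.1 hb
    rw [wc, (down_map_sdiff hbA h0 hpA).1, Finset.sum_singleton]
    have hc : ((predF b : ℕ) : ℂ) + 1 = ((b:ℕ) : ℂ) := by
      have : (predF b : ℕ) + 1 = (b:ℕ) := by simp [predF_val]; omega
      exact_mod_cast congrArg (Nat.cast : ℕ → ℂ) this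
    rw [hc]
  · intro x hx y hy hxy
    obtain ⟨hxA, hx0, hxp⟩ := mem_filter.1 hx
    obtain ⟨hyA, hy0, hyp⟩ := mem_filter.1 hy
    have h1 := (down_map_sdiff hxA hx0 hxp).2
    have h2 := (down_map_sdiff hyA hy0 hyp).2
    simp only at hxy
    rw [hxy] at h1
    rw [h1] at h2
    exact Finset.singleton_injective h2

end SL2A

namespace SL2A

lemma up_filter (A : Finset (Fin n)) :
    univ.filter (fun S => oneBoxUp A S) =
    (A.filter (fun a : Fin n => (a:ℕ) + 1 < n ∧ succF a ∉ A)).image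
      (fun a => insert (succF a) (A.erase a)) := by
  ext S
  simp only [mem_filter, mem_univ, true_and, mem_image]
  constructor
  · rintro ⟨a, b, ha, hb, hab, hS⟩
    have hlt : (a:ℕ) + 1 < n := by have := b.isLt; omega
    have hsb : succF a = b := by apply Fin.ext; rw [succF_val_of_lt hlt, hab]
    exact ⟨a, ⟨ha, hlt, hsb ▸ hb⟩, by rw [hsb, ← hS]⟩
  · rintro ⟨a, ⟨haA, hlt, hsA⟩, rfl⟩
    exact ⟨a, succF a, haA, hsA, succF_val_of_lt hlt, rfl⟩

lemma up_map_sdiff {A : Finset (Fin n)} {a : Fin n} (haA : a ∈ A) (hlt : (a:ℕ) + 1 < n)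
    (hsA : succF a ∉ A) :
    A \ (insert (succF a) (A.erase a)) = {a} := by
  have hne : succF a ≠ a := fun h => by
    have := congrArg Fin.val h; rw [succF_val_of_lt hlt] at this; omega
  ext x
  by_cases h1 : x = a <;> by_cases h2 : x = succF a <;>
    simp_all [mem_sdiff, mem_insert, mem_erase]

lemma up_sum (A : Finset (Fin n)) :
    ∑ S ∈ univ.filter (fun S => oneBoxUp A S), wc A S
    = ∑ a ∈ A.filter (fun a : Fin n => (a:ℕ) + 1 < n ∧ succF a ∉ A),
        ((n:ℂ) - ((a:ℕ) + 1)) * ((a:ℕ) + 1) := by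
  rw [up_filter, Finset.sum_image]
  · apply Finset.sum_congr rfl
    intro a ha
    obtain ⟨haA, hlt, hsA⟩ := mem_filter.1 ha
    rw [wc, up_map_sdiff haA hlt hsA, Finset.sum_singleton]
  · intro x hx y hy hxy
    obtain ⟨hxA, hx0, hxp⟩ := mem_filter.1 hx
    obtain ⟨hyA, hy0, hyp⟩ := mem_filter.1 hy
    have h1 := up_map_sdiff hxA hx0 hxp
    have h2 := up_map_sdiff hyA hy0 hyp
    simp only at hxy
    rw [hxy] at h1
    rw [h1] at h2
    exact Finset.singleton_injective h2

end SL2A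

namespace SL2A

lemma diag_key (A : Finset (Fin n)) :
    (∑ S ∈ univ.filter (fun S => oneBoxUp S A), wc S A)
    - (∑ S ∈ univ.filter (fun S => oneBoxUp A S), wc A S)
    = 2 * (lamWt A : ℂ) - (A.card : ℂ) * ((n:ℂ) - (A.card : ℂ)) := by
  rw [down_sum, up_sum]
  set g : Fin n → ℂ := fun b => ((n:ℂ) - (b:ℕ)) * (b:ℕ) with hg
  set hf : Fin n → ℂ := fun a => ((n:ℂ) - ((a:ℕ) + 1)) * ((a:ℕ) + 1) with hhf
  have e1 : ∑ b ∈ A.filter (fun b : Fin n => 0 < (b:ℕ) ∧ predF b ∉ A), g b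
      = ∑ b ∈ A.filter (fun b : Fin n => ∀ x ∈ A, (x:ℕ) + 1 ≠ (b:ℕ)), g b := by
    apply Finset.sum_subset
    · intro b hb
      obtain ⟨hbA, h0, hp⟩ := mem_filter.1 hb
      refine mem_filter.2 ⟨hbA, fun x hx hxe => hp ?_⟩
      have hxp : x = predF b := by apply Fin.ext; simp only [predF_val]; omega
      exact hxp ▸ hx
    · intro b hb hnb
      obtain ⟨hbA, hq⟩ := mem_filter.1 hb
      have h0 : (b:ℕ) = 0 := by
        by_contra h
        exact hnb (mem_filter.2 ⟨hbA, by omega,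
          fun hp => hq _ hp (by simp only [predF_val]; omega)⟩)
      simp [hg, h0]
  have e2 : ∑ a ∈ A.filter (fun a : Fin n => (a:ℕ) + 1 < n ∧ succF a ∉ A), hf a
      = ∑ a ∈ A.filter (fun a : Fin n => ∀ x ∈ A, (x:ℕ) ≠ (a:ℕ) + 1), hf a := by
    apply Finset.sum_subset
    · intro a ha
      obtain ⟨haA, hlt, hsA⟩ := mem_filter.1 ha
      refine mem_filter.2 ⟨haA, fun x hx hxe => hsA ?_⟩
      have hxp : x = succF a := by apply Fin.ext; rw [succF_val_of_lt hlt]; omega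
      exact hxp ▸ hx
    · intro a ha hna
      obtain ⟨haA, hq⟩ := mem_filter.1 ha
      have hn : (a:ℕ) + 1 = n := by
        have := a.isLt
        by_contra h
        refine hna (mem_filter.2 ⟨haA, by omega, fun hs => ?_⟩)
        exact hq _ hs (succF_val_of_lt (by omega))
      have hc : ((a:ℕ):ℂ) + 1 = (n:ℂ) := by exact_mod_cast congrArg (Nat.cast : ℕ → ℂ) hn
      simp only [hhf, hc]
      ring
  have e3 : ∑ b ∈ A.filter (fun b : Fin n => ¬ ∀ x ∈ A, (x:ℕ) + 1 ≠ (b:ℕ)), g b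
      = ∑ a ∈ A.filter (fun a : Fin n => ¬ ∀ x ∈ A, (x:ℕ) ≠ (a:ℕ) + 1), hf a := by
    apply Finset.sum_nbij' predF succF
    · intro b hb
      obtain ⟨hbA, hq⟩ := mem_filter.1 hb
      push_neg at hq
      obtain ⟨x, hxA, hxe⟩ := hq
      have hxp : predF b = x := by apply Fin.ext; simp only [predF_val]; omega
      refine mem_filter.2 ⟨hxp ▸ hxA, fun hall => ?_⟩
      exact hall b hbA (by simp only [predF_val]; omega)
    · intro a ha
      obtain ⟨haA, hq⟩ := mem_filter.1 ha
      push_neg at hq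
      obtain ⟨x, hxA, hxe⟩ := hq
      have hlt : (a:ℕ) + 1 < n := by have := x.isLt; omega
      have hxs : succF a = x := by apply Fin.ext; rw [succF_val_of_lt hlt]; omega
      refine mem_filter.2 ⟨hxs ▸ hxA, fun hall => ?_⟩
      exact hall a haA (by rw [succF_val_of_lt hlt])
    · intro b hb
      obtain ⟨hbA, hq⟩ := mem_filter.1 hb
      push_neg at hq
      obtain ⟨x, hxA, hxe⟩ := hq
      apply Fin.ext
      have h1 : (b:ℕ) - 1 + 1 = (b:ℕ) := by omega
      rw [succF_val, predF_val, h1, Nat.mod_eq_of_lt b.isLt]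
    · intro a ha
      obtain ⟨haA, hq⟩ := mem_filter.1 ha
      push_neg at hq
      obtain ⟨x, hxA, hxe⟩ := hq
      have hlt : (a:ℕ) + 1 < n := by have := x.isLt; omega
      apply Fin.ext
      simp only [predF_val, succF_val_of_lt hlt]
      omega
    · intro b hb
      obtain ⟨hbA, hq⟩ := mem_filter.1 hb
      push_neg at hq
      obtain ⟨x, hxA, hxe⟩ := hq
      have hc : ((predF b : ℕ) : ℂ) + 1 = ((b:ℕ):ℂ) := by
        have : (predF b : ℕ) + 1 = (b:ℕ) := by simp only [predF_val]; omega
        exact_mod_cast congrArg (Nat.cast : ℕ → ℂ) this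
      simp only [hg, hhf, hc]
  rw [e1, e2]
  have split1 := Finset.sum_filter_add_sum_filter_not A
    (fun b : Fin n => ∀ x ∈ A, (x:ℕ) + 1 ≠ (b:ℕ)) g
  have split2 := Finset.sum_filter_add_sum_filter_not A
    (fun a : Fin n => ∀ x ∈ A, (x:ℕ) ≠ (a:ℕ) + 1) hf
  have e4 : (∑ a ∈ A, g a) - (∑ a ∈ A, hf a)
      = 2 * (∑ a ∈ A, ((a:ℕ):ℂ)) + (A.card : ℂ) * (1 - (n:ℂ)) := by
    rw [← Finset.sum_sub_distrib]
    have : ∀ a ∈ A, g a - hf a = 2 * ((a:ℕ):ℂ) + (1 - (n:ℂ)) := by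
      intro a _; simp only [hg, hhf]; ring
    rw [Finset.sum_congr rfl this, Finset.sum_add_distrib, ← Finset.mul_sum,
      Finset.sum_const, nsmul_eq_mul]
  have hlc := lamWt_complex A
  have hgauss := gauss A.card
  linear_combination split1 - split2 - e3 + e4 - 2 * hlc + hgauss

end SL2A

namespace SL2A

def tmap (A C S : Finset (Fin n)) : Finset (Fin n) := (A ∩ C) ∪ ((A ∪ C) \ S)

lemma tmap_invol {A C S : Finset (Fin n)} (h1 : A ∩ C ⊆ S) (h2 : S ⊆ A ∪ C) :
    tmap A C (tmap A C S) = S := by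
  ext x
  have hx1 : x ∈ A → x ∈ C → x ∈ S := fun hA hC => h1 (mem_inter.2 ⟨hA, hC⟩)
  have hx2 : x ∈ S → x ∈ A ∨ x ∈ C := fun hS => mem_union.1 (h2 hS)
  simp only [tmap, mem_union, mem_inter, mem_sdiff]
  tauto

lemma obu_mk {T A : Finset (Fin n)} {p q : Fin n} (hqA : q ∈ A) (hpA : p ∉ A)
    (hpq : (q:ℕ) = (p:ℕ) + 1) (hT : T = insert p (A.erase q)) : oneBoxUp T A := by
  refine ⟨p, q, ?_, ?_, hpq, ?_⟩
  · rw [hT]; exact mem_insert_self _ _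
  · rw [hT]
    simp only [mem_insert, mem_erase, not_or]
    exact ⟨fun h => (ne_of_succ hpq) h.symm, fun h => h.1 rfl⟩
  · rw [hT, Finset.erase_insert (fun h => hpA (mem_of_mem_erase h)),
      Finset.insert_erase hqA]

lemma tmap_pack {S A C : Finset (Fin n)} {a b a' b' : Fin n}
    (haS : a ∈ S) (hbS : b ∉ S) (ha'S : a' ∈ S) (hb'S : b' ∉ S)
    (haa' : a ≠ a') (hbb' : b ≠ b')
    (hAeq : A = insert b (S.erase a)) (hCeq : C = insert b' (S.erase a')) :
    a' ∈ A ∧ b' ∉ A ∧ a ∈ C ∧ b ∉ C ∧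
    tmap A C S = insert b' (A.erase a') ∧ tmap A C S = insert b (C.erase a) ∧
    C \ tmap A C S = {a} ∧ S \ A = {a} ∧ A ∩ C ⊆ S ∧ S ⊆ A ∪ C := by
  have h1 : a ≠ b := fun h => hbS (h ▸ haS)
  have h2 : a ≠ b' := fun h => hb'S (h ▸ haS)
  have h3 : a' ≠ b := fun h => hbS (h ▸ ha'S)
  have h4 : a' ≠ b' := fun h => hb'S (h ▸ ha'S)
  subst hAeq hCeq
  refine ⟨?_, ?_, ?_, ?_, ?_, ?_, ?_, ?_, ?_, ?_⟩
  · simp [mem_insert, mem_erase, haa'.symm, ha'S, h3.symm]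
  · simp [mem_insert, mem_erase, hbb'.symm, hb'S, h2.symm]
  · simp [mem_insert, mem_erase, haa', haS, h2.symm]
  · simp [mem_insert, mem_erase, hbb', hbS, h3.symm]
  · ext x
    by_cases e1 : x = a <;> by_cases e2 : x = a' <;> by_cases e3 : x = b <;>
      by_cases e4 : x = b' <;>
      simp_all [tmap, mem_union, mem_inter, mem_sdiff, mem_insert, mem_erase]
  · ext x
    by_cases e1 : x = a <;> by_cases e2 : x = a' <;> by_cases e3 : x = b <;>
      by_cases e4 : x = b' <;>
      simp_all [tmap, mem_union, mem_inter, mem_sdiff, mem_insert, mem_erase]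
  · ext x
    by_cases e1 : x = a <;> by_cases e2 : x = a' <;> by_cases e3 : x = b <;>
      by_cases e4 : x = b' <;>
      simp_all [tmap, mem_union, mem_inter, mem_sdiff, mem_insert, mem_erase]
  · ext x
    by_cases e1 : x = a <;> by_cases e2 : x = a' <;> by_cases e3 : x = b <;>
      by_cases e4 : x = b' <;>
      simp_all [mem_sdiff, mem_insert, mem_erase]
  · intro x hx
    simp only [mem_inter, mem_insert, mem_erase] at hx
    by_cases e3 : x = b <;> by_cases e4 : x = b' <;> simp_all
  · intro x hx
    simp only [mem_union, mem_insert, mem_erase]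
    by_cases e1 : x = a <;> by_cases e2 : x = a' <;> simp_all

end SL2A

namespace SL2A

lemma obu_pair_ne {S A C : Finset (Fin n)} {a b a' b' : Fin n}
    (hne : A ≠ C)
    (hab : (b:ℕ) = (a:ℕ) + 1) (hAeq : A = insert b (S.erase a))
    (hab' : (b':ℕ) = (a':ℕ) + 1) (hCeq : C = insert b' (S.erase a')) :
    a ≠ a' ∧ b ≠ b' := by
  have haa' : a ≠ a' := by
    intro h
    subst h
    have : b = b' := Fin.ext (by omega)
    exact hne (by rw [hAeq, hCeq, this])
  exact ⟨haa', fun h => haa' (Fin.ext (by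
    have := congrArg Fin.val h; omega))⟩

lemma obu_pair_ne' {S A C : Finset (Fin n)} {a b a' b' : Fin n}
    (hne : A ≠ C)
    (hab : (a:ℕ) = (b:ℕ) + 1) (hAeq : A = insert b (S.erase a))
    (hab' : (a':ℕ) = (b':ℕ) + 1) (hCeq : C = insert b' (S.erase a')) :
    a ≠ a' ∧ b ≠ b' := by
  have haa' : a ≠ a' := by
    intro h
    subst h
    have : b = b' := Fin.ext (by omega)
    exact hne (by rw [hAeq, hCeq, this])
  exact ⟨haa', fun h => haa' (Fin.ext (by
    have := congrArg Fin.val h; omega))⟩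

lemma offdiag {A C : Finset (Fin n)} (hne : A ≠ C) :
    ∑ S ∈ univ.filter (fun S => oneBoxUp S A ∧ oneBoxUp S C), wc S A
    = ∑ S ∈ univ.filter (fun S => oneBoxUp A S ∧ oneBoxUp C S), wc C S := by
  have key1 : ∀ S, oneBoxUp S A → oneBoxUp S C →
      (oneBoxUp A (tmap A C S) ∧ oneBoxUp C (tmap A C S)) ∧
      wc S A = wc C (tmap A C S) ∧ tmap A C (tmap A C S) = S := by
    intro S h1 h2
    obtain ⟨a, b, haS, hbS, hab, hAeq⟩ := h1
    obtain ⟨a', b', ha'S, hb'S, hab', hCeq⟩ := h2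
    obtain ⟨haa', hbb'⟩ := obu_pair_ne hne hab hAeq hab' hCeq
    obtain ⟨m1, m2, m3, m4, g1, g2, g3, g4, g5, g6⟩ :=
      tmap_pack haS hbS ha'S hb'S haa' hbb' hAeq hCeq
    refine ⟨⟨⟨a', b', m1, m2, hab', g1⟩, ⟨a, b, m3, m4, hab, g2⟩⟩, ?_, tmap_invol g5 g6⟩
    rw [wc, wc, g3, g4]
  have key2 : ∀ S, oneBoxUp A S → oneBoxUp C S →
      (oneBoxUp (tmap A C S) A ∧ oneBoxUp (tmap A C S) C) ∧
      tmap A C (tmap A C S) = S := by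
    intro S h1 h2
    obtain ⟨p, q, hpA, hqA, hpq, hSeq1⟩ := h1
    obtain ⟨p', q', hp'C, hq'C, hpq', hSeq2⟩ := h2
    obtain ⟨hqS, hpS, hAr, -, -, -⟩ := obu_facts hpA hqA hpq hSeq1
    obtain ⟨hq'S, hp'S, hCr, -, -, -⟩ := obu_facts hp'C hq'C hpq' hSeq2
    obtain ⟨hqq', hpp'⟩ := obu_pair_ne' hne hpq hAr hpq' hCr
    obtain ⟨m1, m2, m3, m4, g1, g2, g3, g4, g5, g6⟩ :=
      tmap_pack hqS hpS hq'S hp'S hqq' hpp' hAr hCr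
    exact ⟨⟨obu_mk m1 m2 hpq' g1, obu_mk m3 m4 hpq g2⟩, tmap_invol g5 g6⟩
  apply Finset.sum_nbij' (fun S => tmap A C S) (fun S => tmap A C S)
  · intro S hS
    obtain ⟨-, h1, h2⟩ := mem_filter.1 hS
    exact mem_filter.2 ⟨mem_univ _, (key1 S h1 h2).1⟩
  · intro S hS
    obtain ⟨-, h1, h2⟩ := mem_filter.1 hS
    exact mem_filter.2 ⟨mem_univ _, (key2 S h1 h2).1⟩
  · intro S hS
    obtain ⟨-, h1, h2⟩ := mem_filter.1 hS
    exact (key1 S h1 h2).2.2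
  · intro S hS
    obtain ⟨-, h1, h2⟩ := mem_filter.1 hS
    exact (key2 S h1 h2).2
  · intro S hS
    obtain ⟨-, h1, h2⟩ := mem_filter.1 hS
    exact (key1 S h1 h2).2.1

end SL2A


/-- The raising operator `X Z_A = Σ_{C ∈ e(A,1)} Z_C`, as a matrix in the basis
`(Z_A)_{|A| = m}` (the `(C,A)` entry is the coefficient of `Z_C` in `X Z_A`). -/
noncomputable def Xmat (n m : ℕ) :
    Matrix {A : Finset (Fin n) // A.card = m} {A : Finset (Fin n) // A.card = m} ℂ :=
  fun C A => if oneBoxUp A.1 C.1 then 1 else 0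

/-- The lowering operator `Y Z_A = Σ_{B : A ∈ e(B,1)} (n−b)·b · Z_B`, where `b`
is the unique element of `B ∖ A` (as a value in `{1,…,n}`, i.e. `b = b₀ + 1` for
the zero-indexed element `b₀ : Fin n`). -/
noncomputable def Ymat (n m : ℕ) :
    Matrix {A : Finset (Fin n) // A.card = m} {A : Finset (Fin n) // A.card = m} ℂ :=
  fun B A => if oneBoxUp B.1 A.1 then
      ∑ b ∈ B.1 \ A.1, ((n : ℂ) - ((b : ℕ) + 1)) * ((b : ℕ) + 1)
    else 0

/-- The Cartan operator `H Z_A = (2|λ(A)| − m(n−m)) Z_A`. -/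
noncomputable def Hmat (n m : ℕ) :
    Matrix {A : Finset (Fin n) // A.card = m} {A : Finset (Fin n) // A.card = m} ℂ :=
  fun B A => if B = A then 2 * (lamWt A.1 : ℂ) - (m : ℂ) * ((n : ℂ) - (m : ℂ)) else 0

open SL2A

/-- Proctor: `X`, `Y`, `H` realize `𝔰𝔩₂` on the span of the `Z_A`:
`[H,X] = 2X`, `[H,Y] = −2Y`, `[X,Y] = H`. -/
theorem sl2_realization (n m : ℕ) (hm : m ≤ n) :
    Hmat n m * Xmat n m - Xmat n m * Hmat n m = (2 : ℂ) • Xmat n m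
    ∧ Hmat n m * Ymat n m - Ymat n m * Hmat n m = (-2 : ℂ) • Ymat n m
    ∧ Xmat n m * Ymat n m - Ymat n m * Xmat n m = Hmat n m := by
  have hkey : ∀ w e1 e2 c : ℂ, e1 - e2 = c → e1 * w - w * e2 = c * w := by
    intro w e1 e2 c h; linear_combination w * h
  refine ⟨?_, ?_, ?_⟩
  · ext C A
    rw [Matrix.sub_apply, Matrix.mul_apply, Matrix.mul_apply, Matrix.smul_apply, smul_eq_mul]
    have hs1 : ∑ B : {A : Finset (Fin n) // A.card = m}, Hmat n m C B * Xmat n m B A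
        = Hmat n m C C * Xmat n m C A := by
      apply Finset.sum_eq_single C
      · intro B _ hB
        simp [Hmat, Ne.symm hB]
      · intro h; exact absurd (mem_univ C) h
    have hs2 : ∑ B : {A : Finset (Fin n) // A.card = m}, Xmat n m C B * Hmat n m B A
        = Xmat n m C A * Hmat n m A A := by
      apply Finset.sum_eq_single A
      · intro B _ hB
        simp [Hmat, hB]
      · intro h; exact absurd (mem_univ A) h
    rw [hs1, hs2]
    by_cases h : oneBoxUp A.1 C.1
    · simp only [Xmat, h, if_pos, Hmat, if_pos rfl, mul_one, one_mul]
      have hl := lamWt_obu h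
      linear_combination 2 * hl
    · simp [Xmat, h]
  · ext C A
    rw [Matrix.sub_apply, Matrix.mul_apply, Matrix.mul_apply, Matrix.smul_apply, smul_eq_mul]
    have hs1 : ∑ B : {A : Finset (Fin n) // A.card = m}, Hmat n m C B * Ymat n m B A
        = Hmat n m C C * Ymat n m C A := by
      apply Finset.sum_eq_single C
      · intro B _ hB
        simp [Hmat, Ne.symm hB]
      · intro h; exact absurd (mem_univ C) h
    have hs2 : ∑ B : {A : Finset (Fin n) // A.card = m}, Ymat n m C B * Hmat n m B A
        = Ymat n m C A * Hmat n m A A := by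
      apply Finset.sum_eq_single A
      · intro B _ hB
        simp [Hmat, hB]
      · intro h; exact absurd (mem_univ A) h
    rw [hs1, hs2]
    by_cases h : oneBoxUp C.1 A.1
    · simp only [Ymat, h, if_pos, Hmat, if_pos rfl]
      apply hkey
      have hl := lamWt_obu h
      linear_combination (-2 : ℂ) * hl
    · simp [Ymat, h]
  · ext C A
    rw [Matrix.sub_apply, Matrix.mul_apply, Matrix.mul_apply]
    have h1 : ∀ B : {A : Finset (Fin n) // A.card = m}, Xmat n m C B * Ymat n m B A
        = if oneBoxUp B.1 A.1 ∧ oneBoxUp B.1 C.1 then wc B.1 A.1 else 0 := by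
      intro B
      by_cases hx : oneBoxUp B.1 C.1 <;> by_cases hy : oneBoxUp B.1 A.1 <;>
        simp [Xmat, Ymat, wc, hx, hy]
    have h2 : ∀ B : {A : Finset (Fin n) // A.card = m}, Ymat n m C B * Xmat n m B A
        = if oneBoxUp A.1 B.1 ∧ oneBoxUp C.1 B.1 then wc C.1 B.1 else 0 := by
      intro B
      by_cases hx : oneBoxUp A.1 B.1 <;> by_cases hy : oneBoxUp C.1 B.1 <;>
        simp [Xmat, Ymat, wc, hx, hy]
    rw [Finset.sum_congr rfl (fun B _ => h1 B), Finset.sum_congr rfl (fun B _ => h2 B)]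
    have conv : ∀ (P : Finset (Fin n) → Prop) (w : Finset (Fin n) → ℂ),
        (∀ S, P S → S.card = m) →
        (∑ B : {A : Finset (Fin n) // A.card = m}, if P B.1 then w B.1 else 0)
          = ∑ S ∈ univ.filter P, w S := by
      intro P w hP
      rw [← Finset.sum_subtype (univ.filter fun S : Finset (Fin n) => S.card = m)
        (fun S => by simp) (fun S => if P S then w S else 0)]
      rw [← Finset.sum_filter, Finset.filter_filter]
      congr 1
      ext S
      simp only [mem_filter, mem_univ, true_and]
      exact ⟨fun h => h.2, fun h => ⟨hP S h, h⟩⟩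
    have c1 := conv (fun S => oneBoxUp S A.1 ∧ oneBoxUp S C.1) (fun S => wc S A.1)
        (fun S hS => by rw [← card_eq_of_obu hS.1]; exact A.2)
    have c2 := conv (fun S => oneBoxUp A.1 S ∧ oneBoxUp C.1 S) (fun S => wc C.1 S)
        (fun S hS => by rw [card_eq_of_obu hS.1]; exact A.2)
    have c1' : (∑ B : {A : Finset (Fin n) // A.card = m}, if oneBoxUp B.1 A.1 ∧ oneBoxUp B.1 C.1 then wc B.1 A.1 else 0)
        = ∑ S ∈ univ.filter (fun S => oneBoxUp S A.1 ∧ oneBoxUp S C.1), wc S A.1 := by convert c1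
    have c2' : (∑ B : {A : Finset (Fin n) // A.card = m}, if oneBoxUp A.1 B.1 ∧ oneBoxUp C.1 B.1 then wc C.1 B.1 else 0)
        = ∑ S ∈ univ.filter (fun S => oneBoxUp A.1 S ∧ oneBoxUp C.1 S), wc C.1 S := by convert c2
    rw [c1', c2']
    by_cases hAC : A = C
    · subst hAC
      simp only [and_self]
      rw [Hmat, if_pos rfl]
      have := diag_key A.1
      rw [A.2] at this
      exact this
    · have hne : A.1 ≠ C.1 := fun h => hAC (Subtype.ext h)
      have hz : Hmat n m C A = 0 := by
        rw [Hmat]; exact if_neg (fun h => hAC h.symm)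
      rw [hz, sub_eq_zero]
      have hod := offdiag hne
      convert hod using 2 <;> (ext S; simp)
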